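/- The function ψ(u) = (1 + u²) e^{u²/2} is exponentially convex on ℝ: for all n, all real points t₁,…,tₙ and complex coefficients a₁,…,aₙ, Σᵢⱼ aᵢ āⱼ ψ(tᵢ + tⱼ) ≥ 0. -/

import Mathlib

open MeasureTheory Real Filter Topology

lemma rpow2' (x : ℝ) : x ^ (2:ℝ) = x ^ 2 := by
  rw [show (2:ℝ) = ((2:ℕ):ℝ) by norm_num, Real.rpow_natCast]

lemma integrable_g0 : Integrable (fun x : ℝ => Real.exp (-x ^ 2 / 2)) := by
  have h := integrable_exp_neg_mul_sq (b := (1/2:ℝ)) (by norm_num)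
  refine h.congr (Filter.Eventually.of_forall fun x => ?_)
  ring_nf

lemma integrable_g1 : Integrable (fun x : ℝ => x * Real.exp (-x ^ 2 / 2)) := by
  have h := integrable_mul_exp_neg_mul_sq (b := (1/2:ℝ)) (by norm_num)
  refine h.congr (Filter.Eventually.of_forall fun x => ?_)
  ring_nf

lemma integrable_g2 : Integrable (fun x : ℝ => x ^ 2 * Real.exp (-x ^ 2 / 2)) := by
  have h := integrable_rpow_mul_exp_neg_mul_sq (b := (1/2:ℝ)) (by norm_num) (s := 2) (by norm_num)
  refine h.congr (Filter.Eventually.of_forall fun x => ?_)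
  simp only [rpow2']
  ring_nf

lemma integral_g0 : ∫ x : ℝ, Real.exp (-x ^ 2 / 2) = Real.sqrt (2 * π) := by
  have h := integral_gaussian (1/2 : ℝ)
  rw [show π / (1/2:ℝ) = 2 * π by ring] at h
  rw [← h]
  congr 1; ext x; ring_nf

lemma integral_g1 : ∫ x : ℝ, x * Real.exp (-x ^ 2 / 2) = 0 := by
  have h := integral_neg_eq_self (fun y : ℝ => y * Real.exp (-y ^ 2 / 2)) (volume : Measure ℝ)
  have e : ∀ x : ℝ, (-x) * Real.exp (-(-x) ^ 2 / 2) = -(x * Real.exp (-x ^ 2 / 2)) := by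
    intro x; ring_nf
  simp only [e] at h
  rw [integral_neg] at h
  linarith

lemma hderiv_f (x : ℝ) : HasDerivAt (fun y : ℝ => -y * Real.exp (-y ^ 2 / 2))
    (x ^ 2 * Real.exp (-x ^ 2 / 2) - Real.exp (-x ^ 2 / 2)) x := by
  have h1 : HasDerivAt (fun y : ℝ => -y ^ 2 / 2) (-(2 * x ^ 1) / 2) x :=
    ((hasDerivAt_pow 2 x).neg.div_const 2)
  have h2 := h1.exp
  have h3 := ((hasDerivAt_id x).neg.mul h2)
  convert h3 using 1
  · rfl
  · rfl
  · rfl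
  · simp
    ring

lemma tendsto_f_atTop : Filter.Tendsto (fun y : ℝ => -y * Real.exp (-y ^ 2 / 2)) atTop (𝓝 0) := by
  have h := rpow_mul_exp_neg_mul_sq_isLittleO_exp_neg (b := (1/2:ℝ)) (by norm_num) 1
  have hhalf : Filter.Tendsto (fun x : ℝ => x / 2) atTop atTop :=
    Filter.tendsto_id.atTop_div_const (by norm_num)
  have h0 : Filter.Tendsto (fun x : ℝ => Real.exp (-(1/2) * x)) atTop (𝓝 0) := by
    refine (Real.tendsto_exp_neg_atTop_nhds_zero.comp hhalf).congr fun x => ?_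
    simp only [Function.comp_apply]
    ring_nf
  have h2 : Filter.Tendsto (fun x : ℝ => x ^ (1:ℝ) * Real.exp (-(1/2) * x ^ 2)) atTop (𝓝 0) :=
    h.tendsto_zero_of_tendsto h0
  have h3 : Filter.Tendsto (fun x : ℝ => x * Real.exp (-x ^ 2 / 2)) atTop (𝓝 0) := by
    refine h2.congr' ?_
    filter_upwards [Filter.eventually_ge_atTop (0:ℝ)] with x hx
    rw [Real.rpow_one]
    ring_nf
  simpa using h3.neg

lemma tendsto_f_atBot : Filter.Tendsto (fun y : ℝ => -y * Real.exp (-y ^ 2 / 2)) atBot (𝓝 0) := by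
  rw [← Filter.map_neg_atTop, Filter.tendsto_map'_iff]
  have h3 : Filter.Tendsto (fun x : ℝ => x * Real.exp (-x ^ 2 / 2)) atTop (𝓝 0) := by
    simpa using tendsto_f_atTop.neg
  refine h3.congr fun x => ?_
  simp only [Function.comp_apply]
  ring_nf

lemma integral_g2 : ∫ x : ℝ, x ^ 2 * Real.exp (-x ^ 2 / 2) = Real.sqrt (2 * π) := by
  set f' : ℝ → ℝ := fun x => x ^ 2 * Real.exp (-x ^ 2 / 2) - Real.exp (-x ^ 2 / 2) with hf'
  have hint : Integrable f' := integrable_g2.sub integrable_g0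
  have hIoi : ∫ x in Set.Ioi (0:ℝ), f' x = 0 := by
    rw [integral_Ioi_of_hasDerivAt_of_tendsto' (f := fun y : ℝ => -y * Real.exp (-y ^ 2 / 2))
      (fun x _ => hderiv_f x) hint.integrableOn tendsto_f_atTop]
    norm_num
  have hIic : ∫ x in Set.Iic (0:ℝ), f' x = 0 := by
    rw [integral_Iic_of_hasDerivAt_of_tendsto' (f := fun y : ℝ => -y * Real.exp (-y ^ 2 / 2))
      (fun x _ => hderiv_f x) hint.integrableOn tendsto_f_atBot]
    norm_num
  have htot : ∫ x : ℝ, f' x = 0 := by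
    rw [← intervalIntegral.integral_Iic_add_Ioi hint.integrableOn hint.integrableOn, hIoi, hIic]
    norm_num
  have := integral_sub integrable_g2 integrable_g0
  rw [show (fun x : ℝ => x ^ 2 * Real.exp (-x ^ 2 / 2) - Real.exp (-x ^ 2 / 2)) = f' from rfl] at this
  rw [htot] at this
  have h0 := integral_g0
  linarith [this.symm, sub_eq_zero.mp this.symm]

lemma g_eq (u : ℝ) : ∀ y : ℝ, (y + u) ^ 2 * Real.exp (u ^ 2 / 2) * Real.exp (-y ^ 2 / 2)
    = Real.exp (u ^ 2 / 2) * (y ^ 2 * Real.exp (-y ^ 2 / 2))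
      + (2 * u * Real.exp (u ^ 2 / 2)) * (y * Real.exp (-y ^ 2 / 2))
      + (u ^ 2 * Real.exp (u ^ 2 / 2)) * Real.exp (-y ^ 2 / 2) := by
  intro y; ring

lemma integrable_gshift (u : ℝ) :
    Integrable (fun y : ℝ => (y + u) ^ 2 * Real.exp (u ^ 2 / 2) * Real.exp (-y ^ 2 / 2)) := by
  have h : Integrable (fun y : ℝ =>
      Real.exp (u ^ 2 / 2) * (y ^ 2 * Real.exp (-y ^ 2 / 2))
      + (2 * u * Real.exp (u ^ 2 / 2)) * (y * Real.exp (-y ^ 2 / 2))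
      + (u ^ 2 * Real.exp (u ^ 2 / 2)) * Real.exp (-y ^ 2 / 2)) :=
    ((integrable_g2.const_mul _).add (integrable_g1.const_mul _)).add (integrable_g0.const_mul _)
  exact h.congr (Filter.Eventually.of_forall fun y => (g_eq u y).symm)

lemma pointwise_shift (u x : ℝ) :
    ((x - u) + u) ^ 2 * Real.exp (u ^ 2 / 2) * Real.exp (-(x - u) ^ 2 / 2)
    = x ^ 2 * Real.exp (x * u - x ^ 2 / 2) := by
  rw [mul_assoc, ← Real.exp_add]
  have h : x - u + u = x := by ring
  rw [h]
  congr 1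
  ring

lemma integrable_key (u : ℝ) : Integrable (fun x : ℝ => x ^ 2 * Real.exp (x * u - x ^ 2 / 2)) := by
  have h := (integrable_gshift u).comp_sub_right u
  exact h.congr (Filter.Eventually.of_forall fun x => pointwise_shift u x)

lemma integral_key (u : ℝ) : ∫ x : ℝ, x ^ 2 * Real.exp (x * u - x ^ 2 / 2)
    = Real.sqrt (2 * π) * ((1 + u ^ 2) * Real.exp (u ^ 2 / 2)) := by
  have h1 : ∫ x : ℝ, x ^ 2 * Real.exp (x * u - x ^ 2 / 2)
      = ∫ x : ℝ, ((x - u) + u) ^ 2 * Real.exp (u ^ 2 / 2) * Real.exp (-(x - u) ^ 2 / 2) := by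
    congr 1; ext x; rw [pointwise_shift]
  rw [h1]
  rw [show (fun x : ℝ => ((x - u) + u) ^ 2 * Real.exp (u ^ 2 / 2) * Real.exp (-(x - u) ^ 2 / 2))
      = (fun x : ℝ => (fun y => (y + u) ^ 2 * Real.exp (u ^ 2 / 2) * Real.exp (-y ^ 2 / 2)) (x - u)) from rfl]
  rw [integral_sub_right_eq_self (fun y : ℝ => (y + u) ^ 2 * Real.exp (u ^ 2 / 2) * Real.exp (-y ^ 2 / 2)) u]
  have hA : Integrable (fun y : ℝ => Real.exp (u ^ 2 / 2) * (y ^ 2 * Real.exp (-y ^ 2 / 2))) :=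
    integrable_g2.const_mul _
  have hB : Integrable (fun y : ℝ => (2 * u * Real.exp (u ^ 2 / 2)) * (y * Real.exp (-y ^ 2 / 2))) :=
    integrable_g1.const_mul _
  have hC : Integrable (fun y : ℝ => (u ^ 2 * Real.exp (u ^ 2 / 2)) * Real.exp (-y ^ 2 / 2)) :=
    integrable_g0.const_mul _
  have h2 : ∫ y : ℝ, (y + u) ^ 2 * Real.exp (u ^ 2 / 2) * Real.exp (-y ^ 2 / 2)
      = (∫ y : ℝ, Real.exp (u ^ 2 / 2) * (y ^ 2 * Real.exp (-y ^ 2 / 2)))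
        + (∫ y : ℝ, (2 * u * Real.exp (u ^ 2 / 2)) * (y * Real.exp (-y ^ 2 / 2)))
        + ∫ y : ℝ, (u ^ 2 * Real.exp (u ^ 2 / 2)) * Real.exp (-y ^ 2 / 2) := by
    have e1 : ∫ y : ℝ, (y + u) ^ 2 * Real.exp (u ^ 2 / 2) * Real.exp (-y ^ 2 / 2)
        = ∫ y : ℝ, (Real.exp (u ^ 2 / 2) * (y ^ 2 * Real.exp (-y ^ 2 / 2))
          + (2 * u * Real.exp (u ^ 2 / 2)) * (y * Real.exp (-y ^ 2 / 2)))
          + (u ^ 2 * Real.exp (u ^ 2 / 2)) * Real.exp (-y ^ 2 / 2) := by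
      congr 1; ext y; rw [g_eq u y]
    have hAB : Integrable (fun y : ℝ => Real.exp (u ^ 2 / 2) * (y ^ 2 * Real.exp (-y ^ 2 / 2))
        + (2 * u * Real.exp (u ^ 2 / 2)) * (y * Real.exp (-y ^ 2 / 2))) := hA.add hB
    rw [e1, integral_add hAB hC, integral_add hA hB]
  rw [h2, integral_const_mul, integral_const_mul, integral_const_mul,
    integral_g0, integral_g1, integral_g2]
  ring


lemma ofReal_int (f : ℝ → ℝ) : ∫ x : ℝ, ((f x : ℝ) : ℂ) = ((∫ x : ℝ, f x : ℝ) : ℂ) :=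
  integral_ofReal (𝕜 := ℂ) (f := f)

theorem expConvex_one_add_sq_mul_exp_half_sq
    (n : ℕ) (t : Fin n → ℝ) (a : Fin n → ℂ) :
    0 ≤ (∑ i, ∑ j, a i * (starRingEnd ℂ) (a j) *
          (((1 + (t i + t j) ^ 2) * Real.exp ((t i + t j) ^ 2 / 2) : ℝ) : ℂ)).re ∧
      (∑ i, ∑ j, a i * (starRingEnd ℂ) (a j) *
          (((1 + (t i + t j) ^ 2) * Real.exp ((t i + t j) ^ 2 / 2) : ℝ) : ℂ)).im = 0 := by
  set c : ℝ := (Real.sqrt (2 * π))⁻¹ with hc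
  have hsq : 0 < Real.sqrt (2 * π) := Real.sqrt_pos.mpr (by positivity)
  -- key complex representation
  have key : ∀ u : ℝ, (((1 + u ^ 2) * Real.exp (u ^ 2 / 2) : ℝ) : ℂ)
      = (c : ℂ) * ∫ x : ℝ, ((x ^ 2 * Real.exp (x * u - x ^ 2 / 2) : ℝ) : ℂ) := by
    intro u
    rw [ofReal_int (fun x => x ^ 2 * Real.exp (x * u - x ^ 2 / 2)), integral_key u,
      ← Complex.ofReal_mul]
    congr 1
    rw [hc]
    field_simp
  set h : Fin n → ℝ → ℝ := fun i x => x * Real.exp (x * t i - x ^ 2 / 4) with hh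
  have hij : ∀ i j (x : ℝ), h i x * h j x = x ^ 2 * Real.exp (x * (t i + t j) - x ^ 2 / 2) := by
    intro i j x
    have e1 : h i x * h j x
        = x ^ 2 * (Real.exp (x * t i - x ^ 2 / 4) * Real.exp (x * t j - x ^ 2 / 4)) := by
      rw [hh]; ring
    rw [e1, ← Real.exp_add]
    congr 1
    ring
  set F : Fin n → Fin n → ℝ → ℂ := fun i j x =>
    a i * (starRingEnd ℂ) (a j) * ((x ^ 2 * Real.exp (x * (t i + t j) - x ^ 2 / 2) : ℝ) : ℂ)
    with hF
  have hFint : ∀ i j, Integrable (F i j) :=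
    fun i j => ((integrable_key (t i + t j)).ofReal (μ := volume)).const_mul _
  set g : ℝ → ℂ := fun x => ∑ i, a i * ((h i x : ℝ) : ℂ) with hg
  have pointwise : ∀ x : ℝ, ∑ i, ∑ j, F i j x = ((Complex.normSq (g x) : ℝ) : ℂ) := by
    intro x
    rw [← Complex.mul_conj, hg]
    rw [map_sum]
    rw [Finset.sum_mul_sum]
    refine Finset.sum_congr rfl fun i _ => Finset.sum_congr rfl fun j _ => ?_
    rw [hF]
    simp only [map_mul, Complex.conj_ofReal]
    rw [← hij i j x]
    push_cast
    ring
  have S_eq : (∑ i, ∑ j, a i * (starRingEnd ℂ) (a j) *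
          (((1 + (t i + t j) ^ 2) * Real.exp ((t i + t j) ^ 2 / 2) : ℝ) : ℂ))
      = ((c * ∫ x : ℝ, Complex.normSq (g x) : ℝ) : ℂ) := by
    calc (∑ i, ∑ j, a i * (starRingEnd ℂ) (a j) *
          (((1 + (t i + t j) ^ 2) * Real.exp ((t i + t j) ^ 2 / 2) : ℝ) : ℂ))
        = ∑ i, ∑ j, (c : ℂ) * ∫ x : ℝ, F i j x := by
          refine Finset.sum_congr rfl fun i _ => Finset.sum_congr rfl fun j _ => ?_
          rw [key (t i + t j)]
          simp only [hF, integral_const_mul]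
          ring
      _ = (c : ℂ) * ∑ i, ∑ j, ∫ x : ℝ, F i j x := by
          rw [Finset.mul_sum]
          refine Finset.sum_congr rfl fun i _ => ?_
          rw [Finset.mul_sum]
      _ = (c : ℂ) * ∫ x : ℝ, ∑ i, ∑ j, F i j x := by
          congr 1
          rw [integral_finset_sum _ (fun i _ => integrable_finset_sum _ fun j _ => hFint i j)]
          refine Finset.sum_congr rfl fun i _ => ?_
          rw [integral_finset_sum _ fun j _ => hFint i j]
      _ = (c : ℂ) * ∫ x : ℝ, ((Complex.normSq (g x) : ℝ) : ℂ) := by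
          congr 1
          exact integral_congr_ae (Filter.Eventually.of_forall fun x => pointwise x)
      _ = ((c * ∫ x : ℝ, Complex.normSq (g x) : ℝ) : ℂ) := by
          rw [ofReal_int (fun x => Complex.normSq (g x))]
          push_cast
          ring
  have hr : 0 ≤ c * ∫ x : ℝ, Complex.normSq (g x) :=
    mul_nonneg (inv_nonneg.mpr hsq.le) (integral_nonneg fun x => Complex.normSq_nonneg _)
  rw [S_eq]
  exact ⟨by simpa using hr, by simp⟩
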